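/- Let p be a prime and h ≥ 2. Work in the power series ring T = ℚ_p⟦u₁, …, u_{h−1}⟧ with J the ideal generated by u₁, …, u_{h−1}, and let σ : T → T be the substitution ring endomorphism with σ(u_i) = u_i^p, applied entrywise to matrices. Define the h × h matrices Ψ and Ψ̄ over T by: Ψ_{i,i+1} = p for 1 ≤ i ≤ h−2, Ψ_{h−1,h} = 1, Ψ_{h,1} = p, Ψ_{h,j} = p·u_{h−j+1} for 2 ≤ j ≤ h−1, Ψ_{h,h} = u₁, all other entries 0; and Ψ̄ the same with all u_i replaced by 0 (Ψ̄ is invertible over T since p is invertible in ℚ_p). Then there exists a unique h × h matrix A over T such that every entry of A − I lies in J and A = Ψ · σ(A) · Ψ̄⁻¹. -/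

import Mathlib

set_option linter.unusedSectionVars false
set_option maxHeartbeats 1000000

open MvPowerSeries Finsupp

namespace HorAux

variable {τ : Type} [Fintype τ] [DecidableEq τ] {K : Type} [CommRing K]

/-- total degree of an exponent -/
def deg (d : τ →₀ ℕ) : ℕ := ∑ i, d i

lemma deg_add (a b : τ →₀ ℕ) : deg (a + b) = deg a + deg b := by
  simp [deg, Finset.sum_add_distrib]

lemma deg_eq_zero {d : τ →₀ ℕ} (h : deg d = 0) : d = 0 := by
  ext i
  have := Finset.sum_eq_zero_iff.mp h i (Finset.mem_univ i)
  simpa using this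

lemma deg_zero : deg (0 : τ →₀ ℕ) = 0 := by simp [deg]

lemma deg_smul (p : ℕ) (e : τ →₀ ℕ) : deg (p • e) = p * deg e := by
  simp [deg, Finset.mul_sum]

/-- vanishing of coefficients below degree n -/
def Van (n : ℕ) (f : MvPowerSeries τ K) : Prop :=
  ∀ d : τ →₀ ℕ, deg d < n → MvPowerSeries.coeff d f = 0

lemma Van.sub {n : ℕ} {f g : MvPowerSeries τ K} (hf : Van n f) (hg : Van n g) :
    Van n (f - g) := fun d hd => by simp [map_sub, hf d hd, hg d hd]

lemma Van.add {n : ℕ} {f g : MvPowerSeries τ K} (hf : Van n f) (hg : Van n g) :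
    Van n (f + g) := fun d hd => by simp [map_add, hf d hd, hg d hd]

lemma Van_zero (n : ℕ) : Van n (0 : MvPowerSeries τ K) := fun d _ => by simp

lemma Van.mul_right {n : ℕ} {f : MvPowerSeries τ K} (hf : Van n f)
    (g : MvPowerSeries τ K) : Van n (g * f) := by
  intro d hd
  rw [MvPowerSeries.coeff_mul]
  apply Finset.sum_eq_zero
  rintro ⟨a, b⟩ hab
  rw [Finset.HasAntidiagonal.mem_antidiagonal] at hab
  have hb : deg b < n := by
    have : deg a + deg b = deg d := by rw [← deg_add, hab]
    omega
  simp [hf b hb]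

lemma Van.mul_left {n : ℕ} {f : MvPowerSeries τ K} (hf : Van n f)
    (g : MvPowerSeries τ K) : Van n (f * g) := by
  rw [mul_comm]; exact hf.mul_right g

lemma Van_sum {n : ℕ} {ι : Type*} (s : Finset ι) (f : ι → MvPowerSeries τ K)
    (hf : ∀ i ∈ s, Van n (f i)) : Van n (∑ i ∈ s, f i) := by
  classical
  induction s using Finset.induction_on with
  | empty => simpa using Van_zero n
  | insert a s' hx ih =>
    rw [Finset.sum_insert hx]
    exact (hf a (Finset.mem_insert_self a s')).add
      (ih fun i hi => hf i (Finset.mem_insert_of_mem hi))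

lemma mem_span_X [LinearOrder τ] {f : MvPowerSeries τ K}
    (hf : MvPowerSeries.constantCoeff f = 0) :
    f ∈ Ideal.span (Set.range (MvPowerSeries.X : τ → MvPowerSeries τ K)) := by
  classical
  set g : τ → MvPowerSeries τ K := fun i =>
    (fun e => if (e + Finsupp.single i 1).support.min = (i : WithBot τ)
      then MvPowerSeries.coeff (e + Finsupp.single i 1) f else 0) with hg
  have hcoeffg : ∀ (i : τ) (e : τ →₀ ℕ), MvPowerSeries.coeff e (g i) =
      (if (e + Finsupp.single i 1).support.min = (i : WithBot τ)
      then MvPowerSeries.coeff (e + Finsupp.single i 1) f else 0) := by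
    intro i e; rfl
  have key : f = ∑ i : τ, g i * MvPowerSeries.X i := by
    apply MvPowerSeries.ext
    intro d
    rw [map_sum]
    by_cases hd : d = 0
    · subst hd
      rw [Finset.sum_eq_zero]
      · simpa using hf
      · intro i _
        exact MvPowerSeries.coeff_zero_mul_X _ _
    · have hne : d.support.Nonempty := Finsupp.support_nonempty_iff.mpr hd
      obtain ⟨i₀, hi₀⟩ := Finset.min_of_nonempty hne
      have hi₀mem : i₀ ∈ d.support := Finset.mem_of_min hi₀
      have hle : Finsupp.single i₀ 1 ≤ d := by
        rw [Finsupp.single_le_iff]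
        exact Nat.one_le_iff_ne_zero.mpr (Finsupp.mem_support_iff.mp hi₀mem)
      rw [Finset.sum_eq_single i₀]
      · rw [MvPowerSeries.X_def, MvPowerSeries.coeff_mul_monomial, if_pos hle,
          hcoeffg, tsub_add_cancel_of_le hle]
        rw [hi₀]
        split_ifs with hc
        · rw [mul_one]
        · exact absurd rfl hc
      · intro i _ hi
        rw [MvPowerSeries.X_def, MvPowerSeries.coeff_mul_monomial]
        by_cases hle' : Finsupp.single i 1 ≤ d
        · rw [if_pos hle', hcoeffg, tsub_add_cancel_of_le hle', hi₀]
          have hne' : ((i₀ : WithBot τ)) ≠ (i : WithBot τ) := by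
            simpa using hi.symm
          split_ifs with hc
          · exact absurd hc hne'
          · rw [zero_mul]
        · rw [if_neg hle']
      · intro hmem; exact absurd (Finset.mem_univ i₀) hmem
  rw [key]
  exact Ideal.sum_mem _ fun i _ =>
    Ideal.mul_mem_left _ _ (Ideal.subset_span ⟨i, rfl⟩)

end HorAux

/-- The matrix `Ψ` (1-indexed entries): `Ψ_{i,i+1} = p` for `1 ≤ i ≤ h−2`, `Ψ_{h−1,h} = 1`,
`Ψ_{h,1} = p`, `Ψ_{h,j} = p·u_{h−j+1}` for `2 ≤ j ≤ h−1`, `Ψ_{h,h} = u₁`, others `0`. -/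
def periodPsi (p h : ℕ) (S : Type) [CommRing S] (u : ℕ → S) : Matrix (Fin h) (Fin h) S :=
  Matrix.of fun i j =>
    if (i : ℕ) + 1 ≤ h - 2 ∧ (j : ℕ) + 1 = (i : ℕ) + 2 then (p : S)
    else if (i : ℕ) + 1 = h - 1 ∧ (j : ℕ) + 1 = h then 1
    else if (i : ℕ) + 1 = h ∧ (j : ℕ) + 1 = 1 then (p : S)
    else if (i : ℕ) + 1 = h ∧ 2 ≤ (j : ℕ) + 1 ∧ (j : ℕ) + 1 ≤ h - 1 then
      (p : S) * u (h - ((j : ℕ) + 1) + 1)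
    else if (i : ℕ) + 1 = h ∧ (j : ℕ) + 1 = h then u 1
    else 0

namespace HorAux

lemma psibar_eq (p m : ℕ) (S : Type) [CommRing S] :
    periodPsi p (m + 2) S (fun _ => 0) =
      Matrix.diagonal (fun i : Fin (m + 2) => if (i : ℕ) = m then (1 : S) else (p : S)) *
        (finRotate (m + 2)).permMatrix S := by
  ext i j
  rw [Matrix.diagonal_mul]
  rw [Equiv.Perm.permMatrix, PEquiv.toMatrix_toPEquiv_eq, Matrix.submatrix_apply, id_eq, Matrix.one_apply]
  have hrot : ((finRotate (m + 2)) i : ℕ) = if (i : ℕ) = m + 1 then 0 else (i : ℕ) + 1 := by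
    rw [finRotate_succ_apply, Fin.val_add_one]
    by_cases hi : i = Fin.last (m + 1)
    · rw [if_pos hi, if_pos]; rw [hi]; rfl
    · rw [if_neg hi, if_neg]
      intro hc
      exact hi (Fin.ext hc)
  have harith : ((finRotate (m + 2)) i = j) ↔
      (((i : ℕ) = m + 1 ∧ (j : ℕ) = 0) ∨ ((i : ℕ) ≠ m + 1 ∧ (j : ℕ) = (i : ℕ) + 1)) := by
    rw [Fin.ext_iff, hrot]
    split_ifs with hc <;> omega
  have hival := i.isLt
  have hjval := j.isLt
  simp only [periodPsi, Matrix.of_apply, harith]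
  split_ifs <;>
    first
    | (exfalso; clear hrot harith; omega)
    | rfl
    | (rw [mul_one])
    | (rw [mul_zero])

lemma isUnit_psibar (p m : ℕ) (S : Type) [CommRing S] (hp : IsUnit (p : S)) :
    IsUnit (periodPsi p (m + 2) S (fun _ => 0)) := by
  rw [Matrix.isUnit_iff_isUnit_det, psibar_eq, Matrix.det_mul, Matrix.det_diagonal,
    Matrix.det_permutation]
  apply IsUnit.mul
  · refine Finset.prod_induction _ IsUnit (fun a b ha hb => ha.mul hb) isUnit_one ?_
    intro i _
    split_ifs
    · exact isUnit_one
    · exact hp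
  · rcases Int.units_eq_one_or (Equiv.Perm.sign (finRotate (m + 2))) with hs | hs <;>
      rw [hs] <;> simp

end HorAux

/-- In `T = ℚ_p⟦u₁, …, u_{h−1}⟧`, with `σ` the substitution endomorphism `u_i ↦ u_i^p`
(characterized on coefficients), `J = (u₁, …, u_{h−1})`, and `Ψ, Ψ̄` as above (with
`u_i` the variables, resp. `u_i = 0`; `Ψ̄` is invertible since `p` is invertible in `ℚ_p`),
there is a unique matrix `A` with `A ≡ I mod J` and `A = Ψ·σ(A)·Ψ̄⁻¹`. -/
theorem horizontal_sections_exist_unique (p : ℕ) [Fact p.Prime] (h : ℕ) (hh : 2 ≤ h)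
    (σ : MvPowerSeries (Fin (h - 1)) ℚ_[p] →+* MvPowerSeries (Fin (h - 1)) ℚ_[p])
    (hσ₁ : ∀ (F : MvPowerSeries (Fin (h - 1)) ℚ_[p]) (e : Fin (h - 1) →₀ ℕ),
      MvPowerSeries.coeff (p • e) (σ F) = MvPowerSeries.coeff e F)
    (hσ₂ : ∀ (F : MvPowerSeries (Fin (h - 1)) ℚ_[p]) (d : Fin (h - 1) →₀ ℕ),
      (∀ e : Fin (h - 1) →₀ ℕ, d ≠ p • e) → MvPowerSeries.coeff d (σ F) = 0)
    (J : Ideal (MvPowerSeries (Fin (h - 1)) ℚ_[p]))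
    (hJ : J = Ideal.span (Set.range
      (MvPowerSeries.X : Fin (h - 1) → MvPowerSeries (Fin (h - 1)) ℚ_[p])))
    (uX : ℕ → MvPowerSeries (Fin (h - 1)) ℚ_[p])
    (huX : uX = fun i => if hi : i - 1 < h - 1 then MvPowerSeries.X ⟨i - 1, hi⟩ else 0) :
    IsUnit (periodPsi p h (MvPowerSeries (Fin (h - 1)) ℚ_[p]) fun _ => 0) ∧
    ∃! A : Matrix (Fin h) (Fin h) (MvPowerSeries (Fin (h - 1)) ℚ_[p]),
      (∀ i j, (A - 1) i j ∈ J) ∧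
      A = periodPsi p h (MvPowerSeries (Fin (h - 1)) ℚ_[p]) uX * A.map ⇑σ *
        (periodPsi p h (MvPowerSeries (Fin (h - 1)) ℚ_[p]) fun _ => 0)⁻¹ := by
  obtain ⟨m, rfl⟩ : ∃ m, h = m + 2 := ⟨h - 2, by omega⟩
  have hp2 : 2 ≤ p := (Fact.out (p := p.Prime)).two_le
  -- p is a unit in S
  have hpu : IsUnit ((p : ℚ_[p])) := isUnit_iff_ne_zero.mpr
    (by exact_mod_cast (Fact.out (p := p.Prime)).ne_zero)
  have hpS : IsUnit ((p : MvPowerSeries (Fin (m + 2 - 1)) ℚ_[p])) := by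
    have := hpu.map (MvPowerSeries.C (σ := Fin (m + 2 - 1)) (R := ℚ_[p]))
    rwa [map_natCast] at this
  set Psi := periodPsi p (m + 2) (MvPowerSeries (Fin (m + 2 - 1)) ℚ_[p]) uX with hPsi
  set Psib := periodPsi p (m + 2) (MvPowerSeries (Fin (m + 2 - 1)) ℚ_[p]) (fun _ => 0) with hPsib
  have hU : IsUnit Psib := HorAux.isUnit_psibar p m _ hpS
  refine ⟨hU, ?_⟩
  set B := Psib⁻¹ with hB
  have hdet : IsUnit Psib.det := (Matrix.isUnit_iff_isUnit_det _).mp hU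
  have hBl : Psib * B = 1 := Matrix.mul_nonsing_inv _ hdet
  -- σ raises Van level
  have hVσ : ∀ n : ℕ, 1 ≤ n → ∀ f : MvPowerSeries (Fin (m + 2 - 1)) ℚ_[p], HorAux.Van n f → HorAux.Van (n + 1) (σ f) := by
    intro n hn f hf d hd
    by_cases he : ∃ e, d = p • e
    · obtain ⟨e, rfl⟩ := he
      rw [hσ₁]
      apply hf
      have hdeg : HorAux.deg (p • e) = p * HorAux.deg e := HorAux.deg_smul p e
      rcases Nat.eq_zero_or_pos (HorAux.deg e) with h0 | h0
      · omega
      · have h1 : 2 * HorAux.deg e ≤ p * HorAux.deg e := Nat.mul_le_mul_right _ hp2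
        omega
    · push_neg at he
      exact hσ₂ f d he
  -- matrix-level Van
  have hMmulR : ∀ (n : ℕ) (X Y : Matrix (Fin (m + 2)) (Fin (m + 2)) (MvPowerSeries (Fin (m + 2 - 1)) ℚ_[p])),
      (∀ i j, HorAux.Van n (Y i j)) → ∀ i j, HorAux.Van n ((X * Y) i j) := by
    intro n X Y hY i j
    rw [Matrix.mul_apply]
    exact HorAux.Van_sum _ _ fun k _ => (hY k j).mul_right (X i k)
  have hMmulL : ∀ (n : ℕ) (X Y : Matrix (Fin (m + 2)) (Fin (m + 2)) (MvPowerSeries (Fin (m + 2 - 1)) ℚ_[p])),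
      (∀ i j, HorAux.Van n (X i j)) → ∀ i j, HorAux.Van n ((X * Y) i j) := by
    intro n X Y hX i j
    rw [Matrix.mul_apply]
    exact HorAux.Van_sum _ _ fun k _ => (hX i k).mul_left (Y k j)
  have hMσ : ∀ (n : ℕ), 1 ≤ n → ∀ D : Matrix (Fin (m + 2)) (Fin (m + 2)) (MvPowerSeries (Fin (m + 2 - 1)) ℚ_[p]),
      (∀ i j, HorAux.Van n (D i j)) → ∀ i j, HorAux.Van (n + 1) ((D.map ⇑σ) i j) := by
    intro n hn D hD i j
    rw [Matrix.map_apply]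
    exact hVσ n hn _ (hD i j)
  -- the contraction
  have key : ∀ (n : ℕ), 1 ≤ n → ∀ D : Matrix (Fin (m + 2)) (Fin (m + 2)) (MvPowerSeries (Fin (m + 2 - 1)) ℚ_[p]),
      (∀ i j, HorAux.Van n (D i j)) →
      ∀ i j, HorAux.Van (n + 1) ((Psi * D.map ⇑σ * B) i j) := by
    intro n hn D hD
    exact hMmulL _ _ _ (hMmulR _ _ _ (hMσ n hn D hD))
  -- difference formula
  have Tsub : ∀ X Y : Matrix (Fin (m + 2)) (Fin (m + 2)) (MvPowerSeries (Fin (m + 2 - 1)) ℚ_[p]),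
      (Psi * X.map ⇑σ * B) - (Psi * Y.map ⇑σ * B) = Psi * (X - Y).map ⇑σ * B := by
    intro X Y
    have hms : (X - Y).map ⇑σ = X.map ⇑σ - Y.map ⇑σ :=
      Matrix.map_sub ⇑σ (fun a b => map_sub σ a b) X Y
    rw [hms, Matrix.mul_sub, Matrix.sub_mul]
  -- iteration
  set T : Matrix (Fin (m + 2)) (Fin (m + 2)) (MvPowerSeries (Fin (m + 2 - 1)) ℚ_[p]) → Matrix (Fin (m + 2)) (Fin (m + 2)) (MvPowerSeries (Fin (m + 2 - 1)) ℚ_[p]) :=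
    fun A => Psi * A.map ⇑σ * B with hT
  set Aseq : ℕ → Matrix (Fin (m + 2)) (Fin (m + 2)) (MvPowerSeries (Fin (m + 2 - 1)) ℚ_[p]) := fun n => T^[n] 1 with hAseq
  have hAseq0 : Aseq 0 = 1 := rfl
  have hAseqS : ∀ n, Aseq (n + 1) = T (Aseq n) := by
    intro n
    rw [hAseq]
    exact Function.iterate_succ_apply' T n 1
  -- constant coefficients of uX vanish
  have hcc : ∀ k, MvPowerSeries.constantCoeff (uX k) = 0 := by
    intro k
    rw [huX]
    dsimp only
    split_ifs
    · exact MvPowerSeries.constantCoeff_X _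
    · exact map_zero _
  -- Psi - Psib has entries in J (Van 1)
  have hPsiDiff : ∀ i j, HorAux.Van 1 ((Psi - Psib) i j) := by
    intro i j d hd
    have hd0 : d = 0 := HorAux.deg_eq_zero (by omega)
    subst hd0
    rw [Matrix.sub_apply, map_sub]
    rw [MvPowerSeries.coeff_zero_eq_constantCoeff_apply,
      MvPowerSeries.coeff_zero_eq_constantCoeff_apply]
    simp only [hPsi, hPsib, periodPsi, Matrix.of_apply]
    split_ifs <;>
      simp only [map_mul, map_natCast, map_one, map_zero, mul_zero, sub_self, sub_zero] <;>
      first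
      | rfl
      | (rw [hcc, mul_zero])
      | (rw [hcc])
  -- successive differences
  have step : ∀ n, ∀ i j, HorAux.Van (n + 1) ((Aseq (n + 1) - Aseq n) i j) := by
    intro n
    induction n with
    | zero =>
      have e1 : Aseq 1 - Aseq 0 = (Psi - Psib) * B := by
        rw [hAseqS 0, hAseq0, hT]
        beta_reduce
        have h1 : (1 : Matrix (Fin (m + 2)) (Fin (m + 2)) (MvPowerSeries (Fin (m + 2 - 1)) ℚ_[p])).map ⇑σ = 1 :=
          Matrix.map_one ⇑σ (map_zero σ) (map_one σ)
        rw [h1, Matrix.mul_one]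
        conv_lhs => rw [← hBl]
        rw [Matrix.sub_mul]
      rw [e1]
      exact hMmulL _ _ _ hPsiDiff
    | succ n ih =>
      have e1 : Aseq (n + 2) - Aseq (n + 1) = Psi * (Aseq (n + 1) - Aseq n).map ⇑σ * B := by
        rw [hAseqS (n + 1), hAseqS n, hT]
        beta_reduce
        rw [← Tsub]
      rw [e1]
      exact key (n + 1) (by omega) _ ih
  -- stabilization of coefficients
  have stab : ∀ (d : Fin (m + 2 - 1) →₀ ℕ) (i j : Fin (m + 2)) (n n' : ℕ),
      HorAux.deg d < n → n ≤ n' →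
      MvPowerSeries.coeff d (Aseq n i j) = MvPowerSeries.coeff d (Aseq n' i j) := by
    intro d i j n n' hdn hnn'
    induction n', hnn' using Nat.le_induction with
    | base => rfl
    | succ n' hn' ih =>
      have hv := step n' i j d (by omega)
      rw [Matrix.sub_apply, map_sub, sub_eq_zero] at hv
      rw [ih, ← hv]
  -- the limit matrix
  set Alim : Matrix (Fin (m + 2)) (Fin (m + 2)) (MvPowerSeries (Fin (m + 2 - 1)) ℚ_[p]) := Matrix.of fun i j =>
    ((fun d => MvPowerSeries.coeff d (Aseq (HorAux.deg d + 1) i j)) :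
      MvPowerSeries (Fin (m + 2 - 1)) ℚ_[p]) with hAlimDef
  have hAco : ∀ (d : Fin (m + 2 - 1) →₀ ℕ) (i j : Fin (m + 2)),
      MvPowerSeries.coeff d (Alim i j) =
      MvPowerSeries.coeff d (Aseq (HorAux.deg d + 1) i j) := fun d i j => rfl
  -- Alim agrees with Aseq n below degree n
  have hAlim : ∀ (n : ℕ) (i j : Fin (m + 2)) (d : Fin (m + 2 - 1) →₀ ℕ),
      HorAux.deg d < n →
      MvPowerSeries.coeff d ((Alim - Aseq n) i j) = 0 := by
    intro n i j d hdn
    rw [Matrix.sub_apply, map_sub, hAco]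
    rw [stab d i j (HorAux.deg d + 1) (max (HorAux.deg d + 1) n) (by omega) (le_max_left _ _),
      stab d i j n (max (HorAux.deg d + 1) n) hdn (le_max_right _ _)]
    exact sub_self _
  have hAlim' : ∀ (n : ℕ) (i j : Fin (m + 2)) (d : Fin (m + 2 - 1) →₀ ℕ),
      HorAux.deg d < n →
      MvPowerSeries.coeff d ((Aseq n - Alim) i j) = 0 := by
    intro n i j d hdn
    have := hAlim n i j d hdn
    rw [Matrix.sub_apply, map_sub, sub_eq_zero] at this ⊢
    exact this.symm
  -- Alim is a fixed point
  have hfix : Alim = Psi * Alim.map ⇑σ * B := by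
    ext i j d
    set n := HorAux.deg d + 1 with hn
    have e1 := hAlim (n + 1) i j d (by omega)
    have e2 : MvPowerSeries.coeff d
        ((Psi * (Aseq n).map ⇑σ * B - Psi * Alim.map ⇑σ * B) i j) = 0 := by
      rw [Tsub]
      exact key n (by omega) _ (fun i' j' => hAlim' n i' j') i j d (by omega)
    rw [Matrix.sub_apply, map_sub, sub_eq_zero] at e1 e2
    rw [e1, hAseqS n, hT]
    beta_reduce
    rw [e2]
  -- constant coefficient of Alim - 1 is zero
  have hAc1 : ∀ i j, MvPowerSeries.constantCoeff ((Alim - 1) i j) = 0 := by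
    intro i j
    have e0 : ((Alim - 1) i j) = ((Alim - Aseq 1) i j) + ((Aseq 1 - Aseq 0) i j) := by
      rw [hAseq0, Matrix.sub_apply, Matrix.sub_apply, Matrix.sub_apply]
      ring
    rw [e0, map_add]
    rw [← MvPowerSeries.coeff_zero_eq_constantCoeff_apply,
      ← MvPowerSeries.coeff_zero_eq_constantCoeff_apply]
    rw [hAlim 1 i j 0 (by rw [HorAux.deg_zero]; omega),
      step 0 i j 0 (by rw [HorAux.deg_zero]; omega)]
    exact add_zero 0
  -- J membership characterization
  have hJmem : ∀ f : MvPowerSeries (Fin (m + 2 - 1)) ℚ_[p], MvPowerSeries.constantCoeff f = 0 → f ∈ J := by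
    intro f hf
    rw [hJ]
    exact HorAux.mem_span_X hf
  have hJzero : ∀ f : MvPowerSeries (Fin (m + 2 - 1)) ℚ_[p], f ∈ J → MvPowerSeries.constantCoeff f = 0 := by
    intro f hf
    rw [hJ] at hf
    have hle : Ideal.span (Set.range (MvPowerSeries.X :
        Fin (m + 2 - 1) → MvPowerSeries (Fin (m + 2 - 1)) ℚ_[p])) ≤ RingHom.ker (MvPowerSeries.constantCoeff (σ := Fin (m + 2 - 1)) (R := ℚ_[p])) := by
      rw [Ideal.span_le]
      rintro x ⟨s, rfl⟩
      exact MvPowerSeries.constantCoeff_X s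
    exact hle hf
  refine ⟨Alim, ⟨?_, ?_⟩, ?_⟩
  · intro i j
    exact hJmem _ (hAc1 i j)
  · exact hfix
  · -- uniqueness
    rintro A' ⟨hmem, heq⟩
    have hA'c : ∀ i j, MvPowerSeries.coeff 0 ((A' - Alim) i j) = 0 := by
      intro i j
      have e0 : ((A' - Alim) i j) = ((A' - 1) i j) - ((Alim - 1) i j) := by
        rw [Matrix.sub_apply, Matrix.sub_apply, Matrix.sub_apply]
        ring
      rw [e0, map_sub, MvPowerSeries.coeff_zero_eq_constantCoeff_apply,
        MvPowerSeries.coeff_zero_eq_constantCoeff_apply,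
        hJzero _ (hmem i j), hAc1 i j, sub_zero]
    have hDfix : A' - Alim = Psi * (A' - Alim).map ⇑σ * B := by
      have := Tsub A' Alim
      rw [← heq, ← hfix] at this
      exact this
    have hDn : ∀ (n : ℕ) (i j : Fin (m + 2)) (d : Fin (m + 2 - 1) →₀ ℕ),
        HorAux.deg d < n + 1 → MvPowerSeries.coeff d ((A' - Alim) i j) = 0 := by
      intro n
      induction n with
      | zero =>
        intro i j d hd
        have hd0 : d = 0 := HorAux.deg_eq_zero (by omega)
        subst hd0
        exact hA'c i j
      | succ n ih =>
        intro i j d hd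
        rw [hDfix]
        exact key (n + 1) (by omega) _ (fun i' j' => ih i' j') i j d (by omega)
    have : A' - Alim = 0 := by
      ext i j d
      rw [hDn (HorAux.deg d) i j d (by omega)]
      simp
    exact sub_eq_zero.mp this
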